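/- Fix k and n₀ with k ≤ n₀. If every n₀-qubit state ρ satisfies A_k(ρ) ≤ C(n₀,k), then every n-qubit state with n ≥ n₀ satisfies A_k(ρ) ≤ C(n,k). -/

import Mathlib

open Matrix BigOperators Finset ComplexOrder

/-- The Pauli matrices, indexed by `Fin 4`: identity, X, Y, Z. -/
noncomputable def pauli : Fin 4 → Matrix (Fin 2) (Fin 2) ℂ
  | 0 => 1
  | 1 => !![0, 1; 1, 0]
  | 2 => !![0, -Complex.I; Complex.I, 0]
  | 3 => !![1, 0; 0, -1]

/-- An `n`-qubit Pauli word: the tensor product of the Pauli matrices `pauli (w i)`,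
realized as a matrix indexed by `Fin n → Fin 2`. -/
noncomputable def pWord {n : ℕ} (w : Fin n → Fin 4) :
    Matrix (Fin n → Fin 2) (Fin n → Fin 2) ℂ :=
  Matrix.of fun x y => ∏ i, pauli (w i) (x i) (y i)

/-- The weight of a Pauli word: the number of non-identity tensor factors. -/
def wt {n : ℕ} (w : Fin n → Fin 4) : ℕ :=
  (Finset.univ.filter fun i => w i ≠ 0).card

/-- The `k`-th sector length of an `n`-qubit matrix:
the sum of squared Pauli expectation values over Pauli words of weight `k`. -/
noncomputable def sector (n k : ℕ) (ρ : Matrix (Fin n → Fin 2) (Fin n → Fin 2) ℂ) : ℝ :=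
  ∑ w ∈ Finset.univ.filter fun w : Fin n → Fin 4 => wt w = k,
    ((pWord w * ρ).trace.re) ^ 2

/-- An `n`-qubit quantum state: positive semidefinite with unit trace. -/
def IsState {n : ℕ} (ρ : Matrix (Fin n → Fin 2) (Fin n → Fin 2) ℂ) : Prop :=
  ρ.PosSemidef ∧ ρ.trace = 1

namespace SectorAux

variable {n : ℕ}

/-- partial trace over qubit j -/
noncomputable def ptrace (j : Fin (n+1)) (ρ : Matrix (Fin (n+1) → Fin 2) (Fin (n+1) → Fin 2) ℂ) :
    Matrix (Fin n → Fin 2) (Fin n → Fin 2) ℂ :=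
  Matrix.of fun y y' => ∑ b : Fin 2, ρ (j.insertNth b y) (j.insertNth b y')

lemma sum_insertNth (j : Fin (n+1)) (g : (Fin (n+1) → Fin 2) → ℂ) :
    ∑ x, g x = ∑ y : Fin n → Fin 2, ∑ b : Fin 2, g (j.insertNth b y) := by
  calc ∑ x, g x = ∑ p : Fin 2 × (Fin n → Fin 2), g (j.insertNth p.1 p.2) :=
        (Fintype.sum_equiv (Fin.insertNthEquiv (fun _ => Fin 2) j) _ _ fun p => rfl).symm
    _ = ∑ b : Fin 2, ∑ y : Fin n → Fin 2, g (j.insertNth b y) := Fintype.sum_prod_type _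
    _ = _ := Finset.sum_comm

lemma isState_ptrace (j : Fin (n+1)) (ρ : Matrix (Fin (n+1) → Fin 2) (Fin (n+1) → Fin 2) ℂ)
    (h : IsState ρ) : IsState (ptrace j ρ) := by
  obtain ⟨hρ, htr⟩ := h
  obtain ⟨hherm, hpos⟩ := posSemidef_iff_dotProduct_mulVec.mp hρ
  refine ⟨posSemidef_iff_dotProduct_mulVec.mpr ⟨?_, ?_⟩, ?_⟩
  · ext y y'
    simp only [ptrace, conjTranspose_apply, Matrix.of_apply, star_sum]
    refine Finset.sum_congr rfl fun b _ => ?_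
    exact congrFun (congrFun hherm _) _
  · intro v
    set u : Fin 2 → (Fin (n+1) → Fin 2) → ℂ :=
      fun b x => if x j = b then v (j.removeNth x) else 0 with hu
    have key : dotProduct (star v) (ptrace j ρ *ᵥ v) =
        ∑ b : Fin 2, dotProduct (star (u b)) (ρ *ᵥ u b) := by
      simp only [dotProduct, mulVec, dotProduct, Pi.star_apply]
      simp only [sum_insertNth j]
      simp only [hu, Fin.insertNth_apply_same, Fin.removeNth_insertNth]
      simp only [apply_ite, star_zero, ite_mul, zero_mul, mul_ite, mul_zero,
        Finset.sum_ite_eq', Finset.mem_univ, if_true, ptrace, Matrix.of_apply]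
      simp only [Finset.mul_sum, Finset.sum_mul]
      rw [Finset.sum_comm]
      refine Eq.trans (Finset.sum_congr rfl fun y _ => Finset.sum_comm) ?_
      refine Eq.trans Finset.sum_comm ?_
      exact Finset.sum_congr rfl fun i _ => Finset.sum_comm
    rw [key]
    exact Finset.sum_nonneg fun b _ => hpos (u b)
  · rw [← htr]
    simp only [Matrix.trace, Matrix.diag, ptrace, Matrix.of_apply]
    rw [sum_insertNth j (fun x => ρ x x)]

lemma prod_insertNth (j : Fin (n+1)) (a : Fin 4) (w : Fin n → Fin 4) (b b' : Fin 2)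
    (y y' : Fin n → Fin 2) :
    (∏ i, pauli (Fin.insertNth (α := fun _ => Fin 4) j a w i) (Fin.insertNth (α := fun _ => Fin 2) j b y i)
        (Fin.insertNth (α := fun _ => Fin 2) j b' y' i))
      = pauli a b b' * ∏ i, pauli (w i) (y i) (y' i) := by
  rw [Fin.prod_univ_succAbove _ j]
  simp

lemma wt_insertNth (j : Fin (n+1)) (w : Fin n → Fin 4) :
    wt (j.insertNth 0 w) = wt w := by
  unfold wt
  rw [Finset.card_filter, Finset.card_filter, Fin.sum_univ_succAbove _ j]
  simp

lemma trace_mul_ptrace (j : Fin (n+1)) (w : Fin n → Fin 4)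
    (ρ : Matrix (Fin (n+1) → Fin 2) (Fin (n+1) → Fin 2) ℂ) :
    (pWord w * ptrace j ρ).trace = (pWord (j.insertNth 0 w) * ρ).trace := by
  simp only [Matrix.trace, Matrix.diag, Matrix.mul_apply, pWord, ptrace, Matrix.of_apply]
  simp only [sum_insertNth j]
  simp only [prod_insertNth, show pauli 0 = 1 from rfl, Matrix.one_apply]
  simp only [ite_mul, zero_mul, one_mul, Finset.sum_ite_eq, Finset.mem_univ, if_true]
  simp only [Finset.mul_sum]
  exact Finset.sum_congr rfl fun y _ => Finset.sum_comm

lemma insert_removeNth {β : Type*} (j : Fin (n+1)) (W : Fin (n+1) → β) (z : β) (hz : W j = z) :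
    j.insertNth z (j.removeNth W) = W := by
  conv_rhs => rw [← Fin.insertNth_self_removeNth j W]
  rw [hz]

lemma sector_ptrace (k : ℕ) (j : Fin (n+1))
    (ρ : Matrix (Fin (n+1) → Fin 2) (Fin (n+1) → Fin 2) ℂ) :
    sector n k (ptrace j ρ) =
      ∑ W ∈ Finset.univ.filter (fun W : Fin (n+1) → Fin 4 => wt W = k ∧ W j = 0),
        ((pWord W * ρ).trace.re) ^ 2 := by
  unfold sector
  refine Finset.sum_nbij' (fun w => j.insertNth 0 w) (fun W => j.removeNth W) ?_ ?_ ?_ ?_ ?_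
  · intro w hw
    simp only [Finset.mem_filter, Finset.mem_univ, true_and] at hw ⊢
    exact ⟨(wt_insertNth j w).trans hw, Fin.insertNth_apply_same (α := fun _ => Fin 4) j 0 w⟩
  · intro W hW
    simp only [Finset.mem_filter, Finset.mem_univ, true_and] at hW ⊢
    rw [← wt_insertNth j (j.removeNth W), insert_removeNth j W 0 hW.2]
    exact hW.1
  · intro w _
    exact Fin.removeNth_insertNth (α := fun _ => Fin 4) j 0 w
  · intro W hW
    simp only [Finset.mem_filter, Finset.mem_univ, true_and] at hW
    exact insert_removeNth j W 0 hW.2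
  · intro w _
    rw [trace_mul_ptrace]

lemma count_zero (k : ℕ) (W : Fin (n+1) → Fin 4) (hW : wt W = k) :
    (Finset.univ.filter fun j => W j = 0).card = n + 1 - k := by
  have h := Finset.card_filter_add_card_filter_not
    (s := (Finset.univ : Finset (Fin (n+1)))) (p := fun j => W j = 0)
  have h2 : (Finset.univ.filter fun j => ¬ W j = 0).card = k := hW
  simp only [Finset.card_univ, Fintype.card_fin] at h
  omega

lemma key_identity (k : ℕ) (ρ : Matrix (Fin (n+1) → Fin 2) (Fin (n+1) → Fin 2) ℂ) :
    ∑ j : Fin (n+1), sector n k (ptrace j ρ) =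
      ((n + 1 - k : ℕ) : ℝ) * sector (n+1) k ρ := by
  simp only [sector_ptrace k]
  have hsplit : ∀ j : Fin (n+1),
      (Finset.univ.filter fun W : Fin (n+1) → Fin 4 => wt W = k ∧ W j = 0)
        = (Finset.univ.filter fun W : Fin (n+1) → Fin 4 => wt W = k).filter
            (fun W => W j = 0) := by
    intro j; rw [Finset.filter_filter]
  calc ∑ j : Fin (n+1),
        ∑ W ∈ Finset.univ.filter (fun W : Fin (n+1) → Fin 4 => wt W = k ∧ W j = 0),
          ((pWord W * ρ).trace.re) ^ 2
      = ∑ j : Fin (n+1), ∑ W ∈ Finset.univ.filter (fun W : Fin (n+1) → Fin 4 => wt W = k),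
          if W j = 0 then ((pWord W * ρ).trace.re) ^ 2 else 0 := by
        refine Finset.sum_congr rfl fun j _ => ?_
        rw [hsplit j, Finset.sum_filter]
    _ = ∑ W ∈ Finset.univ.filter (fun W : Fin (n+1) → Fin 4 => wt W = k),
          ∑ j : Fin (n+1), if W j = 0 then ((pWord W * ρ).trace.re) ^ 2 else 0 :=
        Finset.sum_comm
    _ = ∑ W ∈ Finset.univ.filter (fun W : Fin (n+1) → Fin 4 => wt W = k),
          ((n + 1 - k : ℕ) : ℝ) * ((pWord W * ρ).trace.re) ^ 2 := by
        refine Finset.sum_congr rfl fun W hW => ?_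
        rw [← Finset.sum_filter, Finset.sum_const, count_zero k W
          (by simpa using (Finset.mem_filter.mp hW).2), nsmul_eq_mul]
    _ = ((n + 1 - k : ℕ) : ℝ) * sector (n+1) k ρ := by
        rw [sector, ← Finset.mul_sum]

end SectorAux

/-- If every `n₀`-qubit state satisfies `A_k ≤ C(n₀, k)`, then every
`n`-qubit state with `n ≥ n₀` satisfies `A_k ≤ C(n, k)`. -/
theorem sector_bound_induction (k n₀ : ℕ) (hk : k ≤ n₀)
    (hbase : ∀ ρ : Matrix (Fin n₀ → Fin 2) (Fin n₀ → Fin 2) ℂ,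
      IsState ρ → sector n₀ k ρ ≤ n₀.choose k) :
    ∀ n, n₀ ≤ n → ∀ ρ : Matrix (Fin n → Fin 2) (Fin n → Fin 2) ℂ,
      IsState ρ → sector n k ρ ≤ n.choose k := by
  intro n hn
  induction n, hn using Nat.le_induction with
  | base => exact hbase
  | succ n hn ih =>
    intro ρ hρ
    have hkn : k ≤ n := hk.trans hn
    have hkey := SectorAux.key_identity k ρ
    have hle : ∑ j : Fin (n+1), sector n k (SectorAux.ptrace j ρ) ≤ (n+1) * n.choose k := by
      calc ∑ j : Fin (n+1), sector n k (SectorAux.ptrace j ρ)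
          ≤ ∑ _j : Fin (n+1), (n.choose k : ℝ) :=
            Finset.sum_le_sum fun j _ => ih _ (SectorAux.isState_ptrace j ρ hρ)
        _ = (n+1) * n.choose k := by
            rw [Finset.sum_const, Finset.card_univ, Fintype.card_fin, nsmul_eq_mul]
            push_cast; ring
    rw [hkey] at hle
    have hch : ((n+1-k : ℕ) : ℝ) * ((n+1).choose k : ℝ) = (n+1) * n.choose k := by
      have h := Nat.choose_mul_succ_eq n k
      have h2 : ((n.choose k * (n+1) : ℕ) : ℝ) = (((n+1).choose k * (n+1-k) : ℕ) : ℝ) := by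
        exact_mod_cast congrArg (fun m : ℕ => (m : ℝ)) h
      push_cast [Nat.cast_sub (by omega : k ≤ n+1)] at h2 ⊢
      linarith
    have hpos : (0:ℝ) < ((n+1-k : ℕ) : ℝ) := by
      have : 0 < n+1-k := by omega
      exact_mod_cast this
    rw [← hch] at hle
    exact le_of_mul_le_mul_left hle hpos
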